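/- Fix J ≥ 1 latent classes, a nonempty dictionary D over an event alphabet, intensities λ_1, …, λ_J > 0, mixing proportions π_1, …, π_J with π_j > 0 for all j and Σ_j π_j = 1, and κ > 0. For θ = {θ_{jw}} ∈ [0,1]^{J×D}, let p_θ denote the LTDM density of an observation. Then the following are equivalent: (i) there exist a function G, defined on pairs consisting of the event data (K, (E_1,…,E_K)) and the parameter θ, and a function F, defined on full observations (K, (E_1,…,E_K), (T̃_1,…,T̃_K)) and not depending on θ, such that p_θ(K, (E_1,…,E_K), (T̃_1,…,T̃_K)) = G((K, (E_1,…,E_K)), θ) · F(K, (E_1,…,E_K), (T̃_1,…,T̃_K)) for every θ ∈ [0,1]^{J×D} and every observation; (ii) λ_1 = λ_2 = ⋯ = λ_J. -/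

import Mathlib

open scoped Classical

/-- A separation of a sentence `E` with respect to a dictionary `D` is a list `S` of
pairwise distinct patterns, each belonging to `D`, whose concatenation equals `E`. -/
def IsSeparation {𝓔 : Type*} (D : Finset (List 𝓔)) (S : List (List 𝓔)) (E : List 𝓔) : Prop :=
  S.Nodup ∧ (∀ w ∈ S, w ∈ D) ∧ S.flatten = E

/-- The event-pattern part of the LTDM likelihood of a sentence `E` for a class with
pattern probabilities `θ`:
`Σ_{S ∈ 𝓕_D(E)} (1/n_S!) ∏_{w ∈ D} θ_w^{1{w ∈ S}} (1-θ_w)^{1{w ∉ S}}`.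
(The set of separations is finite, so the `tsum` is the corresponding finite sum.) -/
noncomputable def sepSum {𝓔 : Type*} (D : Finset (List 𝓔)) (θ : {w // w ∈ D} → ℝ)
    (E : List 𝓔) : ℝ :=
  ∑' S : {S : List (List 𝓔) // IsSeparation D S E},
    (1 / (Nat.factorial (S : List (List 𝓔)).length : ℝ)) *
      ∏ w ∈ D.attach, (if (w : List 𝓔) ∈ (S : List (List 𝓔)) then θ w else 1 - θ w)

/-- The LTDM density of an observation `(K, (E_1,…,E_K), (T̃_1,…,T̃_K))` under parameters
`(D, θ, λ, π, κ)`: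
`(κ^K e^{-κ}/K!) Σ_j π_j ∏_k [sepSum D (θ j) (E k)] ∏_u λ_j e^{-λ_j t̃_{k,u}}`. -/
noncomputable def ltdmDensity {𝓔 : Type*} {J : ℕ} (D : Finset (List 𝓔))
    (θ : Fin J → {w // w ∈ D} → ℝ) (lam : Fin J → ℝ) (π : Fin J → ℝ) (κ : ℝ)
    (K : ℕ) (E : Fin K → List 𝓔) (T : (k : Fin K) → Fin (E k).length → ℝ) : ℝ :=
  (κ ^ K * Real.exp (-κ) / (Nat.factorial K : ℝ)) *
    ∑ j, π j * ∏ k, (sepSum D (θ j) (E k) *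
      ∏ u, lam j * Real.exp (-(lam j) * T k u))

lemma sepSum_zero_fun {𝓔 : Type*} (D : Finset (List 𝓔)) (E : List 𝓔) (hE : E ≠ []) :
    sepSum D (fun _ => 0) E = 0 := by
  unfold sepSum
  have h : ∀ S : {S : List (List 𝓔) // IsSeparation D S E},
      (1 / (Nat.factorial (S : List (List 𝓔)).length : ℝ)) *
        ∏ w ∈ D.attach,
          (if (w : List 𝓔) ∈ (S : List (List 𝓔)) then (fun _ => (0:ℝ)) w
           else 1 - (fun _ => (0:ℝ)) w) = 0 := by
    rintro ⟨S, hnd, hmem, hflat⟩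
    have hSne : S ≠ [] := by rintro rfl; exact hE hflat.symm
    obtain ⟨w, hw⟩ := List.exists_mem_of_ne_nil S hSne
    have hz : ∏ w' ∈ D.attach,
        (if (w' : List 𝓔) ∈ S then (fun _ => (0:ℝ)) w' else 1 - (fun _ => (0:ℝ)) w') = 0 :=
      Finset.prod_eq_zero (Finset.mem_attach D ⟨w, hmem w hw⟩) (by simp [hw])
    exact mul_eq_zero_of_right _ hz
  exact (tsum_congr h).trans tsum_zero

lemma sepSum_indicator {𝓔 : Type*} (D : Finset (List 𝓔)) (w0 : List 𝓔) (hw0D : w0 ∈ D) :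
    sepSum D (fun w => if (w : List 𝓔) = w0 then 1 else 0) w0 = 1 := by
  unfold sepSum
  have ha : IsSeparation D [w0] w0 := ⟨List.nodup_singleton w0, by simpa using hw0D, by simp⟩
  rw [tsum_eq_single (⟨[w0], ha⟩ : {S : List (List 𝓔) // IsSeparation D S w0}) ?_]
  · have hprod : ∏ w ∈ D.attach,
        (if (w : List 𝓔) ∈ [w0]
          then (fun w : {w // w ∈ D} => if (w : List 𝓔) = w0 then (1:ℝ) else 0) w
          else 1 - (fun w : {w // w ∈ D} => if (w : List 𝓔) = w0 then (1:ℝ) else 0) w) = 1 := by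
      apply Finset.prod_eq_one
      intro w _
      by_cases h : (w : List 𝓔) = w0 <;> simp [h]
    simpa using hprod
  · rintro ⟨S, hnd, hmem, hflat⟩ hne'
    have hSne : S ≠ [w0] := fun h => hne' (Subtype.ext h)
    by_cases hw0S : w0 ∈ S
    · have hex : ∃ w ∈ S, w ≠ w0 := by
        by_contra hc
        push_neg at hc
        apply hSne
        cases S with
        | nil => simp at hw0S
        | cons x xs =>
          have hx : x = w0 := hc x List.mem_cons_self
          cases xs with
          | nil => simp [hx]
          | cons y ys =>
            have hy : y = w0 := hc y (by simp)
            exact absurd (by rw [hx, ← hy]; simp : x ∈ y :: ys) (List.nodup_cons.mp hnd).1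
      obtain ⟨w, hwS, hwne⟩ := hex
      have hz : ∏ w' ∈ D.attach,
          (if (w' : List 𝓔) ∈ S
            then (fun w : {w // w ∈ D} => if (w : List 𝓔) = w0 then (1:ℝ) else 0) w'
            else 1 - (fun w : {w // w ∈ D} => if (w : List 𝓔) = w0 then (1:ℝ) else 0) w') = 0 :=
        Finset.prod_eq_zero (Finset.mem_attach D ⟨w, hmem w hwS⟩) (by simp [hwS, hwne])
      exact mul_eq_zero_of_right _ hz
    · have hz : ∏ w' ∈ D.attach,
          (if (w' : List 𝓔) ∈ S
            then (fun w : {w // w ∈ D} => if (w : List 𝓔) = w0 then (1:ℝ) else 0) w'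
            else 1 - (fun w : {w // w ∈ D} => if (w : List 𝓔) = w0 then (1:ℝ) else 0) w') = 0 :=
        Finset.prod_eq_zero (Finset.mem_attach D ⟨w0, hw0D⟩) (by simp [hw0S])
      exact mul_eq_zero_of_right _ hz

noncomputable def thetaInd {𝓔 : Type*} {J : ℕ} (D : Finset (List 𝓔)) (w0 : List 𝓔)
    (i : Fin J) : Fin J → {w // w ∈ D} → ℝ :=
  fun i' w => if i' = i ∧ (w : List 𝓔) = w0 then 1 else 0

theorem ltdm_density_factorization_iff {𝓔 : Type*} {J : ℕ} (hJ : 1 ≤ J)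
    (D : Finset (List 𝓔)) (hDne : D.Nonempty) (hpat : ∀ w ∈ D, w ≠ [])
    (lam : Fin J → ℝ) (hlam : ∀ j, 0 < lam j)
    (π : Fin J → ℝ) (hπ : ∀ j, 0 < π j) (hsum : ∑ j, π j = 1)
    (κ : ℝ) (hκ : 0 < κ) :
    (∃ (G : ((K : ℕ) × (Fin K → List 𝓔)) → (Fin J → {w // w ∈ D} → ℝ) → ℝ)
       (F : ((K : ℕ) × (E : Fin K → List 𝓔) ×
              ((k : Fin K) → Fin (E k).length → ℝ)) → ℝ),
       ∀ (θ : Fin J → {w // w ∈ D} → ℝ), (∀ j w, θ j w ∈ Set.Icc (0 : ℝ) 1) →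
       ∀ (K : ℕ) (E : Fin K → List 𝓔) (T : (k : Fin K) → Fin (E k).length → ℝ),
         (∀ k u, 0 < T k u) →
         ltdmDensity D θ lam π κ K E T = G ⟨K, E⟩ θ * F ⟨K, E, T⟩) ↔
    ∀ j j' : Fin J, lam j = lam j' := by
  constructor
  · rintro ⟨G, F, hGF⟩ j j'
    obtain ⟨w0, hw0D⟩ := hDne
    have hw0 : w0 ≠ [] := hpat w0 hw0D
    set n := w0.length with hn
    have hnpos : 0 < n := List.length_pos_iff.mpr hw0
    have hsep : ∀ i i' : Fin J, sepSum D (thetaInd D w0 i i') w0 = if i' = i then 1 else 0 := by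
      intro i i'
      by_cases h : i' = i
      · subst h
        have hfun : thetaInd D w0 i' i' = fun w : {w // w ∈ D} => if (w : List 𝓔) = w0 then (1:ℝ) else 0 := by
          funext w; simp [thetaInd]
        rw [hfun, if_pos rfl]
        exact sepSum_indicator D w0 hw0D
      · have hfun : thetaInd D w0 i i' = fun _ => 0 := by
          funext w; simp [thetaInd, h]
        rw [hfun, if_neg h]
        exact sepSum_zero_fun D w0 hw0
    have hIcc : ∀ i : Fin J, ∀ i' w, thetaInd D w0 i i' w ∈ Set.Icc (0:ℝ) 1 := by
      intro i i' w
      unfold thetaInd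
      split <;> simp
    have hdens : ∀ (i : Fin J) (t : ℝ),
        ltdmDensity D (thetaInd D w0 i) lam π κ 1 (fun _ => w0) (fun _ _ => t)
          = (κ * Real.exp (-κ)) * (π i * (lam i ^ n * Real.exp ((n:ℝ) * (-(lam i) * t)))) := by
      intro i t
      unfold ltdmDensity
      rw [Finset.sum_eq_single_of_mem i (Finset.mem_univ i)]
      · simp only [Fin.prod_univ_one, hsep, if_pos rfl, one_mul]
        rw [Finset.prod_const, Finset.card_univ, Fintype.card_fin, mul_pow, ← Real.exp_nat_mul]
        simp [Nat.factorial, hn]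
      · intro b _ hb
        simp only [Fin.prod_univ_one, hsep, if_neg hb, zero_mul, mul_zero]
    have key : ∀ (i : Fin J) (t : ℝ), 0 < t →
        (κ * Real.exp (-κ)) * (π i * (lam i ^ n * Real.exp ((n:ℝ) * (-(lam i) * t))))
          = G ⟨1, fun _ => w0⟩ (thetaInd D w0 i) * F ⟨1, fun _ => w0, fun _ _ => t⟩ := by
      intro i t ht
      exact (hdens i t).symm.trans
        (hGF (thetaInd D w0 i) (hIcc i) 1 (fun _ => w0) (fun _ _ => t) (fun _ _ => ht))
    have hmul : ((κ * Real.exp (-κ)) * (π j * (lam j ^ n * Real.exp ((n:ℝ) * (-(lam j) * 1))))) *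
        ((κ * Real.exp (-κ)) * (π j' * (lam j' ^ n * Real.exp ((n:ℝ) * (-(lam j') * 2))))) =
        ((κ * Real.exp (-κ)) * (π j * (lam j ^ n * Real.exp ((n:ℝ) * (-(lam j) * 2))))) *
        ((κ * Real.exp (-κ)) * (π j' * (lam j' ^ n * Real.exp ((n:ℝ) * (-(lam j') * 1))))) := by
      rw [key j 1 one_pos, key j' 2 two_pos, key j 2 two_pos, key j' 1 one_pos]
      ring
    have hπj := hπ j
    have hπj' := hπ j'
    have hlj := hlam j
    have hlj' := hlam j'
    have hP : (0:ℝ) < (κ * Real.exp (-κ)) * π j * lam j ^ n *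
        ((κ * Real.exp (-κ)) * π j' * lam j' ^ n) := by positivity
    have hexp : Real.exp ((n:ℝ) * (-(lam j) * 1) + (n:ℝ) * (-(lam j') * 2)) =
        Real.exp ((n:ℝ) * (-(lam j) * 2) + (n:ℝ) * (-(lam j') * 1)) := by
      have h2 : ((κ * Real.exp (-κ)) * π j * lam j ^ n *
          ((κ * Real.exp (-κ)) * π j' * lam j' ^ n)) *
            Real.exp ((n:ℝ) * (-(lam j) * 1) + (n:ℝ) * (-(lam j') * 2)) =
          ((κ * Real.exp (-κ)) * π j * lam j ^ n *
          ((κ * Real.exp (-κ)) * π j' * lam j' ^ n)) *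
            Real.exp ((n:ℝ) * (-(lam j) * 2) + (n:ℝ) * (-(lam j') * 1)) := by
        rw [Real.exp_add, Real.exp_add]
        linear_combination hmul
      exact mul_left_cancel₀ (ne_of_gt hP) h2
    have hlin := Real.exp_injective hexp
    have hne : (n:ℝ) ≠ 0 := Nat.cast_ne_zero.mpr hnpos.ne'
    have h3 : (n:ℝ) * lam j = (n:ℝ) * lam j' := by linarith
    exact mul_left_cancel₀ hne h3
  · intro hl
    refine ⟨fun KE θ => ∑ j, π j * ∏ k, sepSum D (θ j) (KE.2 k),
      fun obs => (κ ^ obs.1 * Real.exp (-κ) / (Nat.factorial obs.1 : ℝ)) *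
        ∏ k, ∏ u, lam ⟨0, hJ⟩ * Real.exp (-(lam ⟨0, hJ⟩) * obs.2.2 k u), ?_⟩
    intro θ hθ K E T hT
    unfold ltdmDensity
    have hl0 : ∀ j : Fin J, lam j = lam ⟨0, hJ⟩ := fun j => hl j ⟨0, hJ⟩
    simp only [hl0]
    simp only [Finset.prod_mul_distrib, Finset.sum_mul, Finset.mul_sum]
    refine Finset.sum_congr rfl fun i _ => by ring
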